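/- arXiv:1908.04228 — 5 statements merged into one kernel-verified Lean document; each statement's English description precedes it below -/
import Mathlib

section
/- Let A_1, …, A_m be symmetric n×n complex matrices and let λ_0 ∈ ℂ^m be such that A(λ_0) = Σ_{j=1}^m (λ_0)_j A_j is invertible (i.e., rank A(λ_0) = n). Then A_1, …, A_m are simultaneously diagonalizable via congruence if and only if the matrices A(λ_0)^{-1}A_1, …, A(λ_0)^{-1}A_m are simultaneously diagonalizable via similarity. -/
open Matrix

set_option linter.unusedSectionVars false

section Aux
variable {β : Type} [DecidableEq β]

def Blocked {ι : Type} (f : ι → β) (R : Matrix ι ι ℂ) : Prop :=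
  ∀ i k, f i ≠ f k → R i k = 0

variable {ι : Type} [Fintype ι] [DecidableEq ι]

lemma Blocked.mul {f : ι → β} {X Y : Matrix ι ι ℂ} (hX : Blocked f X) (hY : Blocked f Y) :
    Blocked f (X * Y) := by
  intro i k h
  rw [Matrix.mul_apply]
  apply Finset.sum_eq_zero
  intro c _
  by_cases hc : f i = f c
  · rw [hY c k (fun hck => h (hc.trans hck)), mul_zero]
  · rw [hX i c hc, zero_mul]

lemma Blocked.one {f : ι → β} : Blocked f (1 : Matrix ι ι ℂ) := by
  intro i k h
  exact Matrix.one_apply_ne (fun hik => h (by rw [hik]))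

lemma Blocked.transpose {f : ι → β} {X : Matrix ι ι ℂ} (hX : Blocked f X) : Blocked f Xᵀ :=
  fun i k h => hX k i (Ne.symm h)

def addRow (p : ι) (w : ι → ℂ) : Matrix ι ι ℂ :=
  Matrix.of fun a b => (if a = b then (1:ℂ) else 0) + (if a = p then (1:ℂ) else 0) * w b

lemma mul_addRow (M : Matrix ι ι ℂ) (p : ι) (w : ι → ℂ) (a b : ι) :
    (M * addRow p w) a b = M a b + M a p * w b := by
  simp [addRow, Matrix.mul_apply, mul_add, add_mul, Finset.sum_add_distrib, mul_ite, ite_mul,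
    Finset.sum_ite_eq, Finset.sum_ite_eq', mul_comm]

lemma addRow_transpose_mul (M : Matrix ι ι ℂ) (p : ι) (w : ι → ℂ) (a b : ι) :
    ((addRow p w)ᵀ * M) a b = M a b + w a * M p b := by
  simp [addRow, Matrix.mul_apply, mul_add, add_mul, Finset.sum_add_distrib, mul_ite, ite_mul,
    Finset.sum_ite_eq, Finset.sum_ite_eq', mul_comm]

lemma addRow_congr (M : Matrix ι ι ℂ) (p : ι) (w : ι → ℂ) (a b : ι) :
    ((addRow p w)ᵀ * M * (addRow p w)) a b
      = M a b + M a p * w b + w a * M p b + w a * (M p p * w b) := by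
  rw [mul_addRow, addRow_transpose_mul, addRow_transpose_mul]
  ring

lemma addRow_mul_addRow_neg (p : ι) (w : ι → ℂ) (hw : w p = 0) :
    addRow p w * addRow p (-w) = 1 := by
  ext a b
  simp only [Matrix.mul_apply, addRow, Matrix.of_apply, Pi.neg_apply]
  simp [mul_add, add_mul, Finset.sum_add_distrib, mul_ite, ite_mul,
    Finset.sum_ite_eq, Finset.sum_ite_eq', Matrix.one_apply, hw]

lemma addRow_isUnit (p : ι) (w : ι → ℂ) (hw : w p = 0) : IsUnit (addRow p w) := by
  rw [Matrix.isUnit_iff_isUnit_det]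
  have h := addRow_mul_addRow_neg p w hw
  have : (addRow p w).det * (addRow p (-w)).det = 1 := by
    rw [← Matrix.det_mul, h, Matrix.det_one]
  exact IsUnit.of_mul_eq_one _ this

lemma addRow_blocked {f : ι → β} (p : ι) (w : ι → ℂ) (h : ∀ b, f p ≠ f b → w b = 0) :
    Blocked f (addRow p w) := by
  intro a b hab
  have hne : a ≠ b := fun hab' => hab (by rw [hab'])
  simp only [addRow, Matrix.of_apply, if_neg hne]
  by_cases hap : a = p
  · subst hap; rw [h b hab, mul_zero, add_zero]
  · rw [if_neg hap, zero_mul, add_zero]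

lemma congr_symm {M R : Matrix ι ι ℂ} (h : Mᵀ = M) : (Rᵀ * M * R)ᵀ = Rᵀ * M * R := by
  simp [Matrix.transpose_mul, h, Matrix.mul_assoc]

lemma blocked_congruence_diag :
    ∀ (N : ℕ) (ι : Type) [Fintype ι] [DecidableEq ι], Fintype.card ι ≤ N →
      ∀ (f : ι → β) (M : Matrix ι ι ℂ), Mᵀ = M → Blocked f M →
        ∃ R : Matrix ι ι ℂ, IsUnit R ∧ Blocked f R ∧ (Rᵀ * M * R).IsDiag := by
  intro N
  induction N with
  | zero =>
      intro ι _ _ hcard f M hsym hblk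
      haveI : IsEmpty ι := Fintype.card_eq_zero_iff.mp (Nat.le_zero.mp hcard)
      exact ⟨1, isUnit_one, Blocked.one, Matrix.isDiag_of_subsingleton _⟩
  | succ N ih =>
      intro ι _ _ hcard f M hsym hblk
      by_cases hd : M.IsDiag
      · exact ⟨1, isUnit_one, Blocked.one, by simpa using hd⟩
      obtain ⟨i, k, hik, hMik⟩ : ∃ i k, i ≠ k ∧ M i k ≠ 0 := by
        simp only [Matrix.IsDiag, Pairwise, not_forall] at hd
        obtain ⟨i, k, h1, h2⟩ := hd
        exact ⟨i, k, h1, h2⟩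
      have hfik : f i = f k := by
        by_contra hf
        exact hMik (hblk i k hf)
      -- Step 1: find a congruence making some diagonal entry nonzero
      obtain ⟨R₁, hR₁u, hR₁b, p, hp⟩ :
          ∃ R₁ : Matrix ι ι ℂ, IsUnit R₁ ∧ Blocked f R₁ ∧ ∃ p, (R₁ᵀ * M * R₁) p p ≠ 0 := by
        by_cases hdiag : ∃ p, M p p ≠ 0
        · obtain ⟨p, hp⟩ := hdiag
          exact ⟨1, isUnit_one, Blocked.one, p, by simpa using hp⟩
        · push_neg at hdiag
          have hw : (Pi.single i 1 : ι → ℂ) k = 0 := Pi.single_eq_of_ne (Ne.symm hik) 1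
          refine ⟨addRow k (Pi.single i 1), addRow_isUnit k _ hw, ?_, i, ?_⟩
          · refine addRow_blocked k _ (fun b hb => ?_)
            have : b ≠ i := fun h => hb (by rw [h, ← hfik])
            exact Pi.single_eq_of_ne this 1
          · rw [addRow_congr]
            have hM : M k i = M i k := congrFun (congrFun hsym i) k
            simpa [Pi.single_eq_same, hdiag i, hdiag k, hM, add_self_eq_zero] using hMik
      set M₁ := R₁ᵀ * M * R₁ with hM₁def
      have hM₁sym : M₁ᵀ = M₁ := congr_symm hsym
      have hM₁blk : Blocked f M₁ := (hR₁b.transpose.mul hblk).mul hR₁b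
      -- Step 2: clear row and column p
      set w₃ : ι → ℂ := fun b => if b = p then 0 else -(M₁ p b) / M₁ p p with hw₃def
      have hw₃p : w₃ p = 0 := by simp [hw₃def]
      set R₃ := addRow p w₃ with hR₃def
      have hR₃u : IsUnit R₃ := addRow_isUnit p w₃ hw₃p
      have hR₃b : Blocked f R₃ := by
        refine addRow_blocked p _ (fun b hb => ?_)
        have hbp : b ≠ p := fun h => hb (by rw [h])
        simp [hw₃def, hbp, hM₁blk p b hb]
      set M₂ := R₃ᵀ * M₁ * R₃ with hM₂def
      have hM₂sym : M₂ᵀ = M₂ := congr_symm hM₁sym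
      have hM₂blk : Blocked f M₂ := (hR₃b.transpose.mul hM₁blk).mul hR₃b
      have hM₂row : ∀ b, b ≠ p → M₂ p b = 0 := by
        intro b hbp
        rw [hM₂def, hR₃def, addRow_congr]
        simp only [hw₃def, if_neg hbp, if_pos rfl, hw₃p]
        field_simp
        ring
      have hM₂col : ∀ b, b ≠ p → M₂ b p = 0 := by
        intro b hbp
        have := congrFun (congrFun hM₂sym b) p
        rw [← this]
        exact hM₂row b hbp
      -- Step 3: restrict to the complement of p and use the induction hypothesis
      set ι' := {a : ι // ¬ a = p} with hι'def
      have hcard' : Fintype.card ι' ≤ N := by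
        have : Fintype.card ι' < Fintype.card ι :=
          Fintype.card_subtype_lt (x := p) (not_not_intro rfl)
        omega
      set f' : ι' → β := fun a => f a.1 with hf'def
      set M' : Matrix ι' ι' ℂ := Matrix.of fun x y => M₂ x.1 y.1 with hM'def
      have hM'sym : M'ᵀ = M' := by
        ext x y
        have := congrFun (congrFun hM₂sym x.1) y.1
        simpa [hM'def] using this
      have hM'blk : Blocked f' M' := fun x y h => hM₂blk x.1 y.1 h
      obtain ⟨R', hR'u, hR'b, hR'diag⟩ := ih ι' hcard' f' M' hM'sym hM'blk
      -- Step 4: extend R' to ι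
      haveI : Subsingleton {a : ι // a = p} := ⟨fun x y => Subtype.ext (x.2.trans y.2.symm)⟩
      set e := Equiv.sumCompl (fun a : ι => a = p) with hedef
      set R₄ : Matrix ι ι ℂ := (Matrix.fromBlocks 1 0 0 R').submatrix e.symm e.symm with hR₄def
      have hR₄u : IsUnit R₄ := by
        rw [Matrix.isUnit_iff_isUnit_det, hR₄def, Matrix.det_submatrix_equiv_self,
          Matrix.det_fromBlocks_zero₂₁, Matrix.det_one, one_mul]
        exact (Matrix.isUnit_iff_isUnit_det R').mp hR'u
      have hepos : ∀ (a : ι) (h : a = p), e.symm a = Sum.inl ⟨a, h⟩ := by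
        intro a h
        rw [Equiv.symm_apply_eq]
        rfl
      have heneg : ∀ (a : ι) (h : ¬ a = p), e.symm a = Sum.inr ⟨a, h⟩ := by
        intro a h
        rw [Equiv.symm_apply_eq]
        rfl
      have hR₄b : Blocked f R₄ := by
        intro a b hab
        rw [hR₄def, Matrix.submatrix_apply]
        by_cases ha : a = p <;> by_cases hb : b = p
        · exact absurd (by rw [ha, hb]) hab
        · rw [hepos a ha, heneg b hb]
          rfl
        · rw [heneg a ha, hepos b hb]
          rfl
        · rw [heneg a ha, heneg b hb]
          exact hR'b ⟨a, ha⟩ ⟨b, hb⟩ hab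
      set W : Matrix {a : ι // a = p} {a : ι // a = p} ℂ := Matrix.of fun x y => M₂ x.1 y.1
        with hWdef
      have hM₂e : M₂.submatrix ⇑e ⇑e = Matrix.fromBlocks W 0 0 M' := by
        ext x y
        rcases x with x | x <;> rcases y with y | y
        · simp [hedef, hWdef]
        · simp only [Matrix.submatrix_apply, hedef, Equiv.sumCompl_apply_inl,
            Equiv.sumCompl_apply_inr, Matrix.fromBlocks_apply₁₂, Matrix.zero_apply]
          rw [show (x : ι) = p from x.2]
          exact hM₂row y.1 y.2
        · simp only [Matrix.submatrix_apply, hedef, Equiv.sumCompl_apply_inl,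
            Equiv.sumCompl_apply_inr, Matrix.fromBlocks_apply₂₁, Matrix.zero_apply]
          rw [show (y : ι) = p from y.2]
          exact hM₂col x.1 x.2
        · simp [hedef, hM'def]
      have hkey : R₄ᵀ * M₂ * R₄
          = (Matrix.fromBlocks W 0 0 (R'ᵀ * M' * R')).submatrix ⇑e.symm ⇑e.symm := by
        have hM₂' : M₂ = (Matrix.fromBlocks W 0 0 M').submatrix ⇑e.symm ⇑e.symm := by
          rw [← hM₂e, Matrix.submatrix_submatrix]
          simp [Equiv.self_comp_symm]
        have hT : R₄ᵀ = (Matrix.fromBlocks 1 0 0 R'ᵀ).submatrix ⇑e.symm ⇑e.symm := by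
          rw [hR₄def, Matrix.transpose_submatrix, Matrix.fromBlocks_transpose]
          simp
        rw [hT, hM₂', hR₄def, Matrix.submatrix_mul_equiv, Matrix.submatrix_mul_equiv,
          Matrix.fromBlocks_multiply, Matrix.fromBlocks_multiply]
        simp [Matrix.mul_assoc]
      refine ⟨R₁ * (R₃ * R₄), hR₁u.mul (hR₃u.mul hR₄u), hR₁b.mul (hR₃b.mul hR₄b), ?_⟩
      have : (R₁ * (R₃ * R₄))ᵀ * M * (R₁ * (R₃ * R₄)) = R₄ᵀ * M₂ * R₄ := by
        rw [hM₂def, hM₁def]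
        simp [Matrix.transpose_mul, Matrix.mul_assoc]
      rw [this, hkey]
      refine Matrix.IsDiag.submatrix ?_ e.symm.injective
      exact Matrix.IsDiag.fromBlocks (Matrix.isDiag_of_subsingleton W) hR'diag

end Aux


section Main

lemma isDiag_mul_isDiag {ι : Type} [Fintype ι] [DecidableEq ι] {D E : Matrix ι ι ℂ}
    (hD : D.IsDiag) (hE : E.IsDiag) : (D * E).IsDiag := by
  rw [← hD.diagonal_diag, ← hE.diagonal_diag, Matrix.diagonal_mul_diagonal]
  exact Matrix.isDiag_diagonal _

lemma isDiag_inv {ι : Type} [Fintype ι] [DecidableEq ι] {D : Matrix ι ι ℂ}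
    (hD : D.IsDiag) : D⁻¹.IsDiag := by
  rw [← hD.diagonal_diag, Matrix.inv_diagonal]
  exact Matrix.isDiag_diagonal _

/-- Let A_1, …, A_m be symmetric n×n complex matrices and λ₀ ∈ ℂ^m with
A(λ₀) = Σ_j (λ₀)_j A_j invertible. Then A_1, …, A_m are simultaneously diagonalizable
via congruence iff A(λ₀)⁻¹A_1, …, A(λ₀)⁻¹A_m are simultaneously diagonalizable via
similarity. -/
theorem sdc_iff_sds_of_invertible_pencil (n m : ℕ)
    (A : Fin m → Matrix (Fin n) (Fin n) ℂ) (hsymm : ∀ j, (A j)ᵀ = A j)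
    (lam₀ : Fin m → ℂ) (hinv : IsUnit (∑ j, lam₀ j • A j)) :
    (∃ P : Matrix (Fin n) (Fin n) ℂ, IsUnit P ∧ ∀ j, (Pᵀ * A j * P).IsDiag) ↔
      (∃ P : Matrix (Fin n) (Fin n) ℂ, IsUnit P ∧
        ∀ j, (P⁻¹ * ((∑ k, lam₀ k • A k)⁻¹ * A j) * P).IsDiag) := by
  set B : Matrix (Fin n) (Fin n) ℂ := ∑ j, lam₀ j • A j with hBdef
  have hBdet : IsUnit B.det := (Matrix.isUnit_iff_isUnit_det B).mp hinv
  have hBt : Bᵀ = B := by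
    rw [hBdef, Matrix.transpose_sum]
    exact Finset.sum_congr rfl fun j _ => by rw [Matrix.transpose_smul, hsymm j]
  constructor
  · rintro ⟨P, hPu, hD⟩
    have hPdet : IsUnit P.det := (Matrix.isUnit_iff_isUnit_det P).mp hPu
    have hPtdet : IsUnit (Pᵀ).det := by rwa [Matrix.det_transpose]
    set D : Matrix (Fin n) (Fin n) ℂ := Pᵀ * B * P with hDdef
    have hDeq : D = ∑ j, lam₀ j • (Pᵀ * A j * P) := by
      rw [hDdef, hBdef, Matrix.mul_sum, Matrix.sum_mul]
      exact Finset.sum_congr rfl fun j _ => by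
        rw [Matrix.mul_smul, Matrix.smul_mul]
    have hDdiag : D.IsDiag := by
      intro a b hab
      rw [hDeq, Matrix.sum_apply]
      apply Finset.sum_eq_zero
      intro j _
      rw [Matrix.smul_apply, hD j hab, smul_zero]
    refine ⟨P, hPu, fun j => ?_⟩
    have key : P⁻¹ * (B⁻¹ * A j) * P = D⁻¹ * (Pᵀ * A j * P) := by
      rw [hDdef, Matrix.mul_inv_rev, Matrix.mul_inv_rev]
      simp only [Matrix.mul_assoc]
      rw [Matrix.nonsing_inv_mul_cancel_left _ _ hPtdet]
    rw [key]
    exact isDiag_mul_isDiag (isDiag_inv hDdiag) (hD j)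
  · rintro ⟨P, hPu, hE⟩
    have hPdet : IsUnit P.det := (Matrix.isUnit_iff_isUnit_det P).mp hPu
    have hPtdet : IsUnit (Pᵀ).det := by rwa [Matrix.det_transpose]
    set E : Fin m → Matrix (Fin n) (Fin n) ℂ := fun j => P⁻¹ * (B⁻¹ * A j) * P with hEdef
    have hEdiag : ∀ j, (E j).IsDiag := hE
    have hAj : ∀ j, B * P * E j * P⁻¹ = A j := by
      intro j
      rw [hEdef]
      simp only [Matrix.mul_assoc]
      rw [Matrix.mul_nonsing_inv _ hPdet, Matrix.mul_one,
        Matrix.mul_nonsing_inv_cancel_left _ _ hPdet,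
        Matrix.mul_nonsing_inv_cancel_left _ _ hBdet]
    set M : Matrix (Fin n) (Fin n) ℂ := Pᵀ * B * P with hMdef
    have hMsym : Mᵀ = M := by
      rw [hMdef]
      simp [Matrix.transpose_mul, hBt, Matrix.mul_assoc]
    have key : ∀ j, Pᵀ * A j * P = M * E j := by
      intro j
      rw [← hAj j, hMdef]
      simp only [Matrix.mul_assoc]
      rw [Matrix.nonsing_inv_mul _ hPdet, Matrix.mul_one]
    have key2 : ∀ j, Pᵀ * A j * P = E j * M := by
      intro j
      have h1 : (Pᵀ * A j * P)ᵀ = Pᵀ * A j * P := by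
        simp [Matrix.transpose_mul, hsymm j, Matrix.mul_assoc]
      calc Pᵀ * A j * P = (Pᵀ * A j * P)ᵀ := h1.symm
        _ = (M * E j)ᵀ := by rw [key j]
        _ = (E j)ᵀ * Mᵀ := Matrix.transpose_mul _ _
        _ = E j * M := by rw [hMsym, (hEdiag j).isSymm]
    have hcomm : ∀ j, M * E j = E j * M := fun j => (key j).symm.trans (key2 j)
    set f : Fin n → (Fin m → ℂ) := fun i j => E j i i with hfdef
    have hMblk : Blocked f M := by
      intro a b hab
      obtain ⟨j, hj⟩ := Function.ne_iff.mp hab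
      have h1 := congrFun (congrFun (hcomm j) a) b
      rw [← (hEdiag j).diagonal_diag, Matrix.mul_diagonal, Matrix.diagonal_mul] at h1
      have h2 : M a b * ((E j).diag b - (E j).diag a) = 0 := by linear_combination h1
      rcases mul_eq_zero.mp h2 with h | h
      · exact h
      · exact absurd (sub_eq_zero.mp h).symm hj
    obtain ⟨R, hRu, hRb, hRdiag⟩ :=
      blocked_congruence_diag (Fintype.card (Fin n)) (Fin n) le_rfl f M hMsym hMblk
    refine ⟨P * R, hPu.mul hRu, fun j => ?_⟩
    have hcommR : E j * R = R * E j := by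
      ext a b
      rw [← (hEdiag j).diagonal_diag, Matrix.mul_diagonal, Matrix.diagonal_mul]
      by_cases hfab : f a = f b
      · have : (E j).diag a = (E j).diag b := congrFun hfab j
        rw [this, mul_comm]
      · rw [hRb a b hfab, mul_zero, zero_mul]
    have : (P * R)ᵀ * A j * (P * R) = (Rᵀ * M * R) * E j := by
      rw [Matrix.transpose_mul]
      calc Rᵀ * Pᵀ * A j * (P * R) = Rᵀ * (Pᵀ * A j * P) * R := by
            simp only [Matrix.mul_assoc]
        _ = Rᵀ * (M * E j) * R := by rw [key j]
        _ = Rᵀ * M * (E j * R) := by simp only [Matrix.mul_assoc]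
        _ = Rᵀ * M * (R * E j) := by rw [hcommR]
        _ = (Rᵀ * M * R) * E j := by simp only [Matrix.mul_assoc]
    rw [this]
    exact isDiag_mul_isDiag hRdiag (hEdiag j)

end Main
end

section
/- Let A_1, …, A_m be symmetric n×n complex matrices and let λ_0, λ_1 ∈ ℂ^m both be such that A(λ_0) = Σ_j (λ_0)_j A_j and A(λ_1) = Σ_j (λ_1)_j A_j are invertible. Then the matrices A(λ_0)^{-1}A_1, …, A(λ_0)^{-1}A_m are simultaneously diagonalizable via similarity if and only if the matrices A(λ_1)^{-1}A_1, …, A(λ_1)^{-1}A_m are simultaneously diagonalizable via similarity. -/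
open Matrix

lemma isDiag_mul_of_isDiag {n : ℕ} {A B : Matrix (Fin n) (Fin n) ℂ}
    (ha : A.IsDiag) (hb : B.IsDiag) : (A * B).IsDiag := by
  rw [← ha.diagonal_diag, ← hb.diagonal_diag, diagonal_mul_diagonal]
  exact isDiag_diagonal _

lemma isDiag_inv_of_isDiag {n : ℕ} {A : Matrix (Fin n) (Fin n) ℂ}
    (ha : A.IsDiag) : A⁻¹.IsDiag := by
  rw [← ha.diagonal_diag, inv_diagonal]
  exact isDiag_diagonal _

lemma sds_aux (n m : ℕ)
    (A : Fin m → Matrix (Fin n) (Fin n) ℂ)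
    (lam₀ lam₁ : Fin m → ℂ)
    (hinv₀ : IsUnit (∑ j, lam₀ j • A j)) (hinv₁ : IsUnit (∑ j, lam₁ j • A j))
    (P : Matrix (Fin n) (Fin n) ℂ) (hP : IsUnit P)
    (hD : ∀ j, (P⁻¹ * ((∑ k, lam₀ k • A k)⁻¹ * A j) * P).IsDiag) :
    ∀ j, (P⁻¹ * ((∑ k, lam₁ k • A k)⁻¹ * A j) * P).IsDiag := by
  set B₀ := ∑ k, lam₀ k • A k with hB₀
  set B₁ := ∑ k, lam₁ k • A k with hB₁
  have hB₀d : IsUnit B₀.det := (isUnit_iff_isUnit_det _).1 hinv₀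
  have hB₁d : IsUnit B₁.det := (isUnit_iff_isUnit_det _).1 hinv₁
  have hPd : IsUnit P.det := (isUnit_iff_isUnit_det _).1 hP
  set E : Matrix (Fin n) (Fin n) ℂ := P⁻¹ * (B₀⁻¹ * B₁) * P with hE
  have hEsum : E = ∑ j, lam₁ j • (P⁻¹ * (B₀⁻¹ * A j) * P) := by
    rw [hE, hB₁, Finset.mul_sum, Finset.mul_sum, Finset.sum_mul]
    refine Finset.sum_congr rfl fun j _ => ?_
    simp [mul_smul_comm, smul_mul_assoc]
  have hEdiag : E.IsDiag := by
    rw [hEsum]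
    exact Finset.sum_induction _ Matrix.IsDiag
      (fun a b ha hb => ha.add hb) isDiag_zero (fun j _ => (hD j).smul _)
  have hEinv : E⁻¹ = P⁻¹ * (B₁⁻¹ * B₀) * P := by
    apply inv_eq_left_inv
    rw [hE]
    simp only [Matrix.mul_assoc]
    rw [mul_nonsing_inv_cancel_left _ _ hPd, mul_nonsing_inv_cancel_left _ _ hB₀d,
      nonsing_inv_mul_cancel_left _ _ hB₁d, nonsing_inv_mul _ hPd]
  intro j
  have key : P⁻¹ * (B₁⁻¹ * A j) * P = E⁻¹ * (P⁻¹ * (B₀⁻¹ * A j) * P) := by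
    rw [hEinv]
    simp only [Matrix.mul_assoc]
    rw [mul_nonsing_inv_cancel_left _ _ hPd, mul_nonsing_inv_cancel_left _ _ hB₀d]
  rw [key]
  exact isDiag_mul_of_isDiag (isDiag_inv_of_isDiag hEdiag) (hD j)

/-- Let A_1, …, A_m be symmetric n×n complex matrices and λ₀, λ₁ ∈ ℂ^m be
such that A(λ₀) and A(λ₁) are both invertible. Then A(λ₀)⁻¹A_1, …, A(λ₀)⁻¹A_m are SDS
iff A(λ₁)⁻¹A_1, …, A(λ₁)⁻¹A_m are SDS. -/
theorem sds_independent_of_pencil_point (n m : ℕ)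
    (A : Fin m → Matrix (Fin n) (Fin n) ℂ) (hsymm : ∀ j, (A j)ᵀ = A j)
    (lam₀ lam₁ : Fin m → ℂ)
    (hinv₀ : IsUnit (∑ j, lam₀ j • A j)) (hinv₁ : IsUnit (∑ j, lam₁ j • A j)) :
    (∃ P : Matrix (Fin n) (Fin n) ℂ, IsUnit P ∧
        ∀ j, (P⁻¹ * ((∑ k, lam₀ k • A k)⁻¹ * A j) * P).IsDiag) ↔
      (∃ P : Matrix (Fin n) (Fin n) ℂ, IsUnit P ∧
        ∀ j, (P⁻¹ * ((∑ k, lam₁ k • A k)⁻¹ * A j) * P).IsDiag) := by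
  constructor
  · rintro ⟨P, hP, hD⟩
    exact ⟨P, hP, sds_aux n m A lam₀ lam₁ hinv₀ hinv₁ P hP hD⟩
  · rintro ⟨P, hP, hD⟩
    exact ⟨P, hP, sds_aux n m A lam₁ lam₀ hinv₁ hinv₀ P hP hD⟩
end

section
/- Let A_1, …, A_m be symmetric n×n complex matrices with maximum pencil rank r, where A(λ) = Σ_{j=1}^m λ_j A_j. Then A_1, …, A_m are simultaneously diagonalizable via congruence if and only if dim(⋂_{j=1}^m ker A_j) = n − r and there exists an invertible P ∈ M_n(ℂ) such that P^T A_j P = D̃_j ⊕ 0_{n−r} for all j, where each D̃_j ∈ M_r(ℂ) is diagonal. Moreover, for any such P and D̃_1, …, D̃_m and any λ_0 ∈ ℂ^m with rank A(λ_0) = r, the matrix Σ_{j=1}^m (λ_0)_j D̃_j is an invertible r×r matrix. -/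
open Matrix

/-- For `B ∈ M_r(ℂ)`, the block-diagonal matrix `B ⊕ 0_{n−r} ∈ M_n(ℂ)` having `B` in
the top-left r×r corner and zeros elsewhere. -/
def blockOplusZero (n r : ℕ) (B : Matrix (Fin r) (Fin r) ℂ) : Matrix (Fin n) (Fin n) ℂ :=
  fun i k => if h : (i : ℕ) < r ∧ (k : ℕ) < r then B ⟨i, h.1⟩ ⟨k, h.2⟩ else 0

section Aux

lemma exists_generic {m n : ℕ} (d : Fin m → Fin n → ℂ) (s : Finset (Fin n))
    (hs : ∀ i ∈ s, ∃ j, d j i ≠ 0) :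
    ∃ lam : Fin m → ℂ, ∀ i ∈ s, ∑ j, lam j * d j i ≠ 0 := by
  classical
  induction s using Finset.induction_on with
  | empty => exact ⟨0, by simp⟩
  | @insert i₀ s hi₀ ih =>
    obtain ⟨lam, hlam⟩ := ih (fun i hi => hs i (Finset.mem_insert_of_mem hi))
    obtain ⟨j₀, hj₀⟩ := hs i₀ (Finset.mem_insert_self _ _)
    set S : Fin n → ℂ := fun i => ∑ j, lam j * d j i with hS
    obtain ⟨t, ht⟩ := Infinite.exists_notMem_finset
      ((insert i₀ s).image (fun i => -S i / d j₀ i))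
    refine ⟨fun j => lam j + if j = j₀ then t else 0, ?_⟩
    intro i hi
    have hsum : ∑ j, (lam j + if j = j₀ then t else 0) * d j i = S i + t * d j₀ i := by
      simp only [add_mul, Finset.sum_add_distrib, ite_mul, zero_mul]
      rw [Finset.sum_ite_eq' Finset.univ j₀ (fun j => t * d j i)]
      simp [hS]
    rw [hsum]
    intro h
    by_cases hd : d j₀ i = 0
    · have hSi : S i = 0 := by simpa [hd] using h
      rcases Finset.mem_insert.mp hi with rfl | hi'
      · exact hj₀ hd
      · exact hlam i hi' hSi
    · have : t = -S i / d j₀ i := by field_simp; linear_combination h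
      exact ht (Finset.mem_image.mpr ⟨i, hi, this.symm⟩)

lemma diag_sum {m n : ℕ} (lam : Fin m → ℂ) (d : Fin m → Fin n → ℂ) :
    ∑ j, lam j • Matrix.diagonal (d j) = Matrix.diagonal (fun i => ∑ j, lam j * d j i) := by
  ext i k
  by_cases h : i = k
  · subst h; simp [Matrix.sum_apply]
  · simp [Matrix.sum_apply, Matrix.diagonal_apply_ne _ h, h]

lemma rank_conj {n : ℕ} (P M : Matrix (Fin n) (Fin n) ℂ) (hP : IsUnit P) :
    (Pᵀ * M * P).rank = M.rank := by
  have h1 : IsUnit P.det := (Matrix.isUnit_iff_isUnit_det P).mp hP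
  have h2 : IsUnit Pᵀ.det := by rwa [Matrix.det_transpose]
  rw [Matrix.rank_mul_eq_left_of_isUnit_det P (Pᵀ * M) h1,
    Matrix.rank_mul_eq_right_of_isUnit_det Pᵀ M h2]

lemma isUnit_of_rank_eq {r : ℕ} (B : Matrix (Fin r) (Fin r) ℂ) (h : B.rank = r) : IsUnit B := by
  rw [← Matrix.mulVec_injective_iff_isUnit]
  have htop : LinearMap.range B.mulVecLin = ⊤ := by
    apply Submodule.eq_top_of_finrank_eq
    rw [← Matrix.rank, h]
    simp
  have hsurj : Function.Surjective B.mulVecLin := LinearMap.range_eq_top.mp htop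
  have := LinearMap.injective_iff_surjective.mpr hsurj
  exact this

noncomputable def Emat (n r : ℕ) : Matrix (Fin n) (Fin r) ℂ :=
  Matrix.of fun i a => if (i : ℕ) = (a : ℕ) then 1 else 0

lemma Emat_tr_mul (n r : ℕ) (hrn : r ≤ n) : (Emat n r)ᵀ * Emat n r = 1 := by
  ext a b
  simp only [Matrix.mul_apply, Matrix.transpose_apply, Emat, Matrix.of_apply]
  rw [Finset.sum_eq_single (⟨(a : ℕ), lt_of_lt_of_le a.2 hrn⟩ : Fin n)]
  · by_cases h : a = b
    · subst h; simp [Matrix.one_apply]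
    · have : ¬ ((a : ℕ) = (b : ℕ)) := fun hc => h (Fin.ext hc)
      simp [Matrix.one_apply, h, this]
  · intro i _ hi
    have : ¬ ((i : ℕ) = (a : ℕ)) := fun hc => hi (Fin.ext hc)
    simp [this]
  · simp

lemma blockOplusZero_eq (n r : ℕ) (B : Matrix (Fin r) (Fin r) ℂ) :
    blockOplusZero n r B = Emat n r * B * (Emat n r)ᵀ := by
  ext i k
  simp only [Matrix.mul_apply, Matrix.transpose_apply, Emat, Matrix.of_apply, blockOplusZero]
  by_cases hi : (i : ℕ) < r
  · by_cases hk : (k : ℕ) < r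
    · rw [dif_pos ⟨hi, hk⟩]
      rw [Finset.sum_eq_single (⟨(k : ℕ), hk⟩ : Fin r)]
      · rw [Finset.sum_eq_single (⟨(i : ℕ), hi⟩ : Fin r)]
        · simp
        · intro a _ ha
          have : ¬ ((i : ℕ) = (a : ℕ)) := fun hc => ha (Fin.ext hc.symm)
          simp [this]
        · simp
      · intro b _ hb
        have : ¬ ((k : ℕ) = (b : ℕ)) := fun hc => hb (Fin.ext hc.symm)
        simp [this]
      · simp
    · rw [dif_neg (by tauto)]
      symm
      apply Finset.sum_eq_zero
      intro b _
      have : ¬ ((k : ℕ) = (b : ℕ)) := fun hc => hk (hc ▸ b.2)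
      simp [this]
  · rw [dif_neg (by tauto)]
    symm
    apply Finset.sum_eq_zero
    intro b _
    have : (∑ a : Fin r, (if (i : ℕ) = (a : ℕ) then (1:ℂ) else 0) * B a b) = 0 := by
      apply Finset.sum_eq_zero
      intro a _
      have : ¬ ((i : ℕ) = (a : ℕ)) := fun hc => hi (hc ▸ a.2)
      simp [this]
    rw [this, zero_mul]

lemma rank_blockOplusZero {n r : ℕ} (hrn : r ≤ n) (B : Matrix (Fin r) (Fin r) ℂ) :
    (blockOplusZero n r B).rank = B.rank := by
  apply le_antisymm
  · rw [blockOplusZero_eq]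
    exact le_trans (Matrix.rank_mul_le_left _ _) (Matrix.rank_mul_le_right _ _)
  · have hB : B = (Emat n r)ᵀ * blockOplusZero n r B * Emat n r := by
      rw [blockOplusZero_eq]
      rw [show (Emat n r)ᵀ * (Emat n r * B * (Emat n r)ᵀ) * Emat n r
          = ((Emat n r)ᵀ * Emat n r) * B * ((Emat n r)ᵀ * Emat n r) by
        simp only [Matrix.mul_assoc]]
      rw [Emat_tr_mul n r hrn, Matrix.one_mul, Matrix.mul_one]
    conv_lhs => rw [hB]
    exact le_trans (Matrix.rank_mul_le_left _ _) (Matrix.rank_mul_le_right _ _)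

lemma blockOplusZero_sum {n r m : ℕ} (lam : Fin m → ℂ) (Dt : Fin m → Matrix (Fin r) (Fin r) ℂ) :
    ∑ j, lam j • blockOplusZero n r (Dt j) = blockOplusZero n r (∑ j, lam j • Dt j) := by
  ext i k
  simp only [Matrix.sum_apply, Matrix.smul_apply, blockOplusZero, smul_eq_mul]
  by_cases h : (i : ℕ) < r ∧ (k : ℕ) < r
  · simp [h, Matrix.sum_apply]
  · simp [h]

lemma exists_perm_finset {n : ℕ} (S : Finset (Fin n)) :
    ∃ σ : Equiv.Perm (Fin n), ∀ i : Fin n, ((i : ℕ) < S.card ↔ σ i ∈ S) := by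
  classical
  have hsn : S.card ≤ n := by simpa using S.card_le_univ
  have hc : Fintype.card {i : Fin n // i ∉ S} = n - S.card := by
    rw [Fintype.card_subtype_compl]
    simp [Fintype.card_coe]
  let e2 : {i : Fin n // i ∈ S} ≃ Fin S.card := S.equivFin
  let e3 : {i : Fin n // i ∉ S} ≃ Fin (n - S.card) := Fintype.equivFinOfCardEq hc
  let e1 : Fin n ≃ Fin S.card ⊕ Fin (n - S.card) :=
    (finCongr (Nat.add_sub_cancel' hsn).symm).trans finSumFinEquiv.symm
  refine ⟨e1.trans ((Equiv.sumCongr e2.symm e3.symm).trans (Equiv.sumCompl (· ∈ S))), fun i => ?_⟩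
  rcases h : e1 i with a | b
  · have hiv : (i : ℕ) = (a : ℕ) := by
      have : i = e1.symm (Sum.inl a) := by rw [← h, Equiv.symm_apply_apply]
      rw [this]
      simp [e1]
    simp only [Equiv.trans_apply, h, Equiv.sumCongr_apply, Sum.map_inl,
      Equiv.sumCompl_apply_inl]
    constructor
    · intro _; exact (e2.symm a).2
    · intro _; rw [hiv]; exact a.2
  · have hiv : (i : ℕ) = S.card + (b : ℕ) := by
      have : i = e1.symm (Sum.inr b) := by rw [← h, Equiv.symm_apply_apply]
      rw [this]
      simp [e1]
    simp only [Equiv.trans_apply, h, Equiv.sumCongr_apply, Sum.map_inr,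
      Equiv.sumCompl_apply_inr]
    constructor
    · intro hlt; omega
    · intro hmem; exact absurd hmem (e3.symm b).2

noncomputable def Qmat {n : ℕ} (σ : Equiv.Perm (Fin n)) : Matrix (Fin n) (Fin n) ℂ :=
  Matrix.of fun a i => if a = σ i then 1 else 0

lemma Qmat_tr_mul {n : ℕ} (σ : Equiv.Perm (Fin n)) : (Qmat σ)ᵀ * Qmat σ = 1 := by
  ext i k
  simp only [Matrix.mul_apply, Matrix.transpose_apply, Qmat, Matrix.of_apply, ite_mul, zero_mul,
    one_mul]
  rw [Finset.sum_ite_eq' Finset.univ (σ i) (fun a => if a = σ k then (1:ℂ) else 0)]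
  simp [Matrix.one_apply, EmbeddingLike.apply_eq_iff_eq]

lemma Qmat_isUnit {n : ℕ} (σ : Equiv.Perm (Fin n)) : IsUnit (Qmat σ) := by
  rw [Matrix.isUnit_iff_isUnit_det]
  have h := congrArg Matrix.det (Qmat_tr_mul σ)
  rw [Matrix.det_mul, Matrix.det_one, Matrix.det_transpose] at h
  exact isUnit_iff_exists_inv.mpr ⟨_, h⟩

lemma Qmat_conj {n : ℕ} (σ : Equiv.Perm (Fin n)) (M : Matrix (Fin n) (Fin n) ℂ) :
    (Qmat σ)ᵀ * M * Qmat σ = M.submatrix σ σ := by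
  ext i k
  simp only [Matrix.mul_apply, Matrix.transpose_apply, Qmat, Matrix.of_apply, ite_mul, zero_mul,
    Matrix.submatrix_apply, mul_ite, mul_zero, mul_one, one_mul]
  rw [Finset.sum_ite_eq' Finset.univ (σ k) (fun b => ∑ a, if a = σ i then M a b else 0)]
  simp only [Finset.mem_univ, if_true]
  rw [Finset.sum_ite_eq' Finset.univ (σ i) (fun a => M a (σ k))]
  simp

lemma finrank_inf_ker_diag {m n : ℕ} (d : Fin m → Fin n → ℂ)
    (S : Finset (Fin n)) (hS : ∀ i, i ∈ S ↔ ∃ j, d j i ≠ 0) :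
    Module.finrank ℂ ↥(⨅ j, LinearMap.ker (Matrix.diagonal (d j)).mulVecLin) = n - S.card := by
  classical
  set f : (Fin n → ℂ) →ₗ[ℂ] ({i : Fin n // i ∈ S} → ℂ) :=
    LinearMap.funLeft ℂ ℂ (fun i => i.val) with hf
  have hker : (⨅ j, LinearMap.ker (Matrix.diagonal (d j)).mulVecLin) = LinearMap.ker f := by
    ext x
    simp only [Submodule.mem_iInf, LinearMap.mem_ker, Matrix.mulVecLin_apply]
    constructor
    · intro h
      funext i
      obtain ⟨j, hj⟩ := (hS i.1).mp i.2
      have := congrFun (h j) i.1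
      simp only [Matrix.mulVec_diagonal, Pi.zero_apply] at this
      have hx : x i.1 = 0 := by
        rcases mul_eq_zero.mp this with h' | h'
        · exact absurd h' hj
        · exact h'
      simpa [hf, LinearMap.funLeft] using hx
    · intro h j
      funext i
      simp only [Matrix.mulVec_diagonal, Pi.zero_apply]
      by_cases hd : d j i = 0
      · simp [hd]
      · have hi : i ∈ S := (hS i).mpr ⟨j, hd⟩
        have := congrFun h (⟨i, hi⟩ : {i : Fin n // i ∈ S})
        simp only [hf, LinearMap.funLeft_apply, Pi.zero_apply] at this
        simp [this]
  rw [hker]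
  have hsurj : Function.Surjective f :=
    LinearMap.funLeft_surjective_of_injective ℂ ℂ _ Subtype.val_injective
  have h1 := LinearMap.finrank_range_add_finrank_ker f
  rw [LinearMap.range_eq_top.mpr hsurj, finrank_top] at h1
  rw [Module.finrank_fintype_fun_eq_card, Module.finrank_fintype_fun_eq_card,
    Fintype.card_coe, Fintype.card_fin] at h1
  omega

lemma inf_ker_transfer {m n : ℕ} (A : Fin m → Matrix (Fin n) (Fin n) ℂ)
    (P : Matrix (Fin n) (Fin n) ℂ) (hP : IsUnit P) (D : Fin m → Matrix (Fin n) (Fin n) ℂ)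
    (hPAP : ∀ j, Pᵀ * A j * P = D j) :
    Module.finrank ℂ ↥(⨅ j, LinearMap.ker (A j).mulVecLin)
      = Module.finrank ℂ ↥(⨅ j, LinearMap.ker (D j).mulVecLin) := by
  have hdet : IsUnit P.det := (Matrix.isUnit_iff_isUnit_det P).mp hP
  have hPT : IsUnit Pᵀ := (Matrix.isUnit_transpose (A := P)).mpr hP
  let e : (Fin n → ℂ) ≃ₗ[ℂ] (Fin n → ℂ) :=
    LinearEquiv.ofLinear (Matrix.mulVecLin P) (Matrix.mulVecLin P⁻¹)
      (by rw [← Matrix.mulVecLin_mul, Matrix.mul_nonsing_inv P hdet, Matrix.mulVecLin_one])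
      (by rw [← Matrix.mulVecLin_mul, Matrix.nonsing_inv_mul P hdet, Matrix.mulVecLin_one])
  have hmap : (⨅ j, LinearMap.ker (A j).mulVecLin)
      = Submodule.map (e : (Fin n → ℂ) →ₗ[ℂ] (Fin n → ℂ)) (⨅ j, LinearMap.ker (D j).mulVecLin) := by
    ext x
    rw [Submodule.mem_map_equiv]
    simp only [Submodule.mem_iInf, LinearMap.mem_ker, Matrix.mulVecLin_apply]
    have hsymm : (e.symm x) = P⁻¹.mulVec x := rfl
    have key : ∀ (j : Fin m) (v : Fin n → ℂ),
        (D j).mulVec (P⁻¹.mulVec v) = Pᵀ.mulVec ((A j).mulVec v) := by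
      intro j v
      rw [← hPAP j, Matrix.mulVec_mulVec, Matrix.mul_assoc (Pᵀ * A j) P P⁻¹,
        Matrix.mul_nonsing_inv P hdet, Matrix.mul_one, ← Matrix.mulVec_mulVec]
    constructor
    · intro h j
      rw [hsymm, key j x, h j, Matrix.mulVec_zero]
    · intro h j
      have hj := h j
      rw [hsymm, key j x] at hj
      have hinj : Function.Injective (Pᵀ.mulVec) :=
        (Matrix.mulVec_injective_iff_isUnit).mpr hPT
      have h0 : Pᵀ.mulVec ((A j).mulVec x) = Pᵀ.mulVec 0 := by
        rw [Matrix.mulVec_zero]; exact hj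
      exact hinj h0
  rw [hmap, LinearEquiv.finrank_map_eq]

lemma conj_pencil {m n : ℕ} (A : Fin m → Matrix (Fin n) (Fin n) ℂ)
    (P : Matrix (Fin n) (Fin n) ℂ) (lam : Fin m → ℂ) :
    Pᵀ * (∑ j, lam j • A j) * P = ∑ j, lam j • (Pᵀ * A j * P) := by
  rw [Finset.mul_sum, Finset.sum_mul]
  congr 1
  funext j
  rw [Matrix.mul_smul, Matrix.smul_mul]

lemma iSup_rank_eq {m n : ℕ} (A : Fin m → Matrix (Fin n) (Fin n) ℂ)
    (P : Matrix (Fin n) (Fin n) ℂ) (hP : IsUnit P) (d : Fin m → Fin n → ℂ)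
    (hPAP : ∀ j, Pᵀ * A j * P = Matrix.diagonal (d j))
    (S : Finset (Fin n)) (hS : ∀ i, i ∈ S ↔ ∃ j, d j i ≠ 0) :
    (⨆ lam : Fin m → ℂ, (∑ j, lam j • A j).rank) = S.card := by
  classical
  have hrank : ∀ lam : Fin m → ℂ,
      (∑ j, lam j • A j).rank = Fintype.card {i // (∑ j, lam j * d j i) ≠ 0} := by
    intro lam
    rw [← rank_conj P _ hP, conj_pencil]
    have : ∑ j, lam j • (Pᵀ * A j * P) = Matrix.diagonal (fun i => ∑ j, lam j * d j i) := by
      rw [show (fun j => lam j • (Pᵀ * A j * P)) = fun j => lam j • Matrix.diagonal (d j) by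
        funext j; rw [hPAP j]]
      exact diag_sum lam d
    rw [this, Matrix.rank_diagonal]
  apply le_antisymm
  · apply ciSup_le
    intro lam
    rw [hrank lam, ← Fintype.card_coe S]
    apply Fintype.card_subtype_mono
    intro i hi
    apply (hS i).mpr
    by_contra hc
    push_neg at hc
    exact hi (by simp [show ∀ j, d j i = 0 from fun j => by simpa using hc j])
  · obtain ⟨lam, hlam⟩ := exists_generic d S (fun i hi => (hS i).mp hi)
    have hcard : Fintype.card {i // (∑ j, lam j * d j i) ≠ 0} = S.card := by
      rw [← Fintype.card_coe S]
      apply Fintype.card_congr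
      apply Equiv.subtypeEquivRight
      intro i
      constructor
      · intro h
        exact (hS i).mpr (by
          by_contra hc
          push_neg at hc
          exact h (by simp [show ∀ j, d j i = 0 from fun j => by simpa using hc j]))
      · intro hi
        exact hlam i hi
    calc S.card = (∑ j, lam j • A j).rank := by rw [hrank lam, hcard]
    _ ≤ ⨆ lam : Fin m → ℂ, (∑ j, lam j • A j).rank := by
        apply le_ciSup (f := fun lam : Fin m → ℂ => (∑ j, lam j • A j).rank)
        refine ⟨n, ?_⟩
        rintro x ⟨lam', rfl⟩
        simpa using Matrix.rank_le_card_height (∑ j, lam' j • A j)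

end Aux

/-- Let A_1, …, A_m be symmetric n×n complex matrices with maximum pencil
rank r. Then A_1, …, A_m are SDC iff dim(⋂_j ker A_j) = n − r and there is an invertible
P with Pᵀ A_j P = D̃_j ⊕ 0_{n−r} for diagonal D̃_j ∈ M_r(ℂ).  Moreover, for any such P
and D̃_j and any λ₀ with rank A(λ₀) = r, the matrix Σ_j (λ₀)_j D̃_j is invertible. -/
theorem sdc_iff_block_diagonal_reduction (n m : ℕ)
    (A : Fin m → Matrix (Fin n) (Fin n) ℂ) (hsymm : ∀ j, (A j)ᵀ = A j) (r : ℕ)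
    (hr : r = ⨆ lam : Fin m → ℂ, (∑ j, lam j • A j).rank) :
    ((∃ P : Matrix (Fin n) (Fin n) ℂ, IsUnit P ∧ ∀ j, (Pᵀ * A j * P).IsDiag) ↔
      (Module.finrank ℂ ↥(⨅ j, LinearMap.ker (A j).mulVecLin) = n - r ∧
        ∃ P : Matrix (Fin n) (Fin n) ℂ, IsUnit P ∧
          ∃ Dt : Fin m → Matrix (Fin r) (Fin r) ℂ, (∀ j, (Dt j).IsDiag) ∧
            ∀ j, Pᵀ * A j * P = blockOplusZero n r (Dt j))) ∧
    (∀ (P : Matrix (Fin n) (Fin n) ℂ) (Dt : Fin m → Matrix (Fin r) (Fin r) ℂ),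
      IsUnit P → (∀ j, (Dt j).IsDiag) →
      (∀ j, Pᵀ * A j * P = blockOplusZero n r (Dt j)) →
      ∀ lam₀ : Fin m → ℂ, (∑ j, lam₀ j • A j).rank = r →
        IsUnit (∑ j, lam₀ j • Dt j)) := by
  classical
  constructor
  · constructor
    · rintro ⟨P, hP, hdiag⟩
      set d : Fin m → Fin n → ℂ := fun j i => (Pᵀ * A j * P) i i with hd
      have hPAP : ∀ j, Pᵀ * A j * P = Matrix.diagonal (d j) := by
        intro j; ext i k
        by_cases h : i = k
        · subst h; simp [hd]
        · rw [Matrix.diagonal_apply_ne _ h]; exact hdiag j h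
      set S : Finset (Fin n) := Finset.univ.filter (fun i => ∃ j, d j i ≠ 0) with hSdef
      have hS : ∀ i, i ∈ S ↔ ∃ j, d j i ≠ 0 := by intro i; simp [hSdef]
      have hrS : r = S.card := by rw [hr, iSup_rank_eq A P hP d hPAP S hS]
      refine ⟨?_, ?_⟩
      · rw [inf_ker_transfer A P hP _ hPAP, finrank_inf_ker_diag d S hS, hrS]
      · obtain ⟨σ, hσ⟩ := exists_perm_finset S
        have hrn : r ≤ n := by rw [hrS]; simpa using S.card_le_univ
        refine ⟨P * Qmat σ, hP.mul (Qmat_isUnit σ),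
          fun j => Matrix.of fun a b =>
            if a = b then d j (σ (⟨(a : ℕ), lt_of_lt_of_le a.2 hrn⟩ : Fin n)) else 0,
          fun j a b hab => if_neg hab, ?_⟩
        intro j
        have h1 : (P * Qmat σ)ᵀ * A j * (P * Qmat σ)
            = (Qmat σ)ᵀ * (Pᵀ * A j * P) * Qmat σ := by
          rw [Matrix.transpose_mul]
          simp only [Matrix.mul_assoc]
        rw [h1, hPAP j, Qmat_conj, Matrix.submatrix_diagonal_equiv]
        ext i k
        by_cases h : (i : ℕ) < r ∧ (k : ℕ) < r
        · have hOZ : blockOplusZero n r (Matrix.of fun a b =>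
              if a = b then d j (σ (⟨(a : ℕ), lt_of_lt_of_le a.2 hrn⟩ : Fin n)) else 0) i k
              = if (⟨(i : ℕ), h.1⟩ : Fin r) = ⟨(k : ℕ), h.2⟩
                  then d j (σ (⟨(i : ℕ), lt_of_lt_of_le h.1 hrn⟩ : Fin n)) else 0 := by
            simp only [blockOplusZero, dif_pos h, Matrix.of_apply]
          rw [hOZ]
          have hi' : (⟨(i : ℕ), lt_of_lt_of_le h.1 hrn⟩ : Fin n) = i := Fin.ext rfl
          rw [hi']
          by_cases hik : i = k
          · subst hik
            simp [Matrix.diagonal_apply_eq]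
          · have : ¬ ((⟨(i : ℕ), h.1⟩ : Fin r) = ⟨(k : ℕ), h.2⟩) := by
              intro hc
              have h2 : (i : ℕ) = (k : ℕ) := congrArg (Fin.val (n := r)) hc
              exact hik (Fin.ext h2)
            rw [if_neg this, Matrix.diagonal_apply_ne _ hik]
        · have hOZ : blockOplusZero n r (Matrix.of fun a b =>
              if a = b then d j (σ (⟨(a : ℕ), lt_of_lt_of_le a.2 hrn⟩ : Fin n)) else 0) i k
              = 0 := by
            simp only [blockOplusZero, dif_neg h]
          rw [hOZ]
          by_cases hik : i = k
          · subst hik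
            have hir : ¬ ((i : ℕ) < r) := by tauto
            have hnotS : σ i ∉ S := fun hc => hir (hrS ▸ (hσ i).mpr hc)
            have hzero : ∀ j', d j' (σ i) = 0 := by
              intro j'
              by_contra hc
              exact hnotS ((hS (σ i)).mpr ⟨j', hc⟩)
            simp [Matrix.diagonal_apply_eq, hzero j]
          · rw [Matrix.diagonal_apply_ne _ hik]
    · rintro ⟨_, P, hP, Dt, hDt, hblock⟩
      refine ⟨P, hP, fun j => ?_⟩
      rw [hblock j]
      intro i k hik
      show (if h : (i : ℕ) < r ∧ (k : ℕ) < r then Dt j ⟨i, h.1⟩ ⟨k, h.2⟩ else 0) = 0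
      split_ifs with h
      · apply hDt j
        intro hc
        have h2 : (i : ℕ) = (k : ℕ) := congrArg (Fin.val (n := r)) hc
        exact hik (Fin.ext h2)
      · rfl
  · intro P Dt hP hDt hblock lam₀ hrank
    have hrn : r ≤ n := by
      rw [← hrank]
      simpa using Matrix.rank_le_card_height (∑ j, lam₀ j • A j)
    have htrans : Pᵀ * (∑ j, lam₀ j • A j) * P = blockOplusZero n r (∑ j, lam₀ j • Dt j) := by
      rw [conj_pencil, show (fun j => lam₀ j • (Pᵀ * A j * P))
          = fun j => lam₀ j • blockOplusZero n r (Dt j) by funext j; rw [hblock j]]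
      exact blockOplusZero_sum lam₀ Dt
    have hbrank : (blockOplusZero n r (∑ j, lam₀ j • Dt j)).rank = r := by
      rw [← htrans, rank_conj _ _ hP, hrank]
    rw [rank_blockOplusZero hrn] at hbrank
    exact isUnit_of_rank_eq _ hbrank
end

section
/- Let A_1, …, A_m be symmetric n×n complex matrices with maximum pencil rank r, where A(λ) = Σ_{j=1}^m λ_j A_j. Then dim(⋂_{j=1}^m ker A_j) = n − r if and only if there exists an invertible Q ∈ M_n(ℂ) such that Q^T A_j Q = Ã_j ⊕ 0_{n−r} for all j = 1, …, m, where each Ã_j ∈ M_r(ℂ) is symmetric. Moreover, for any such Q and Ã_1, …, Ã_m and any λ_0 ∈ ℂ^m with rank A(λ_0) = r, the matrix Ã(λ_0) = Σ_{j=1}^m (λ_0)_j Ã_j is an invertible r×r matrix. -/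
open Matrix

namespace AuxBOZ

variable {n r : ℕ}

/-- extension by zero -/
def iota (n r : ℕ) : (Fin r → ℂ) →ₗ[ℂ] (Fin n → ℂ) where
  toFun y := fun i => if hi : (i : ℕ) < r then y ⟨i, hi⟩ else 0
  map_add' x y := by ext i; by_cases hi : (i : ℕ) < r <;> simp [hi]
  map_smul' c x := by ext i; by_cases hi : (i : ℕ) < r <;> simp [hi]

lemma iota_injective (h : r ≤ n) : Function.Injective (iota n r) := by
  intro x y hxy
  funext p
  have := congrFun hxy (Fin.castLE h p)
  simpa [iota, p.isLt] using this

lemma iota_ker (h : r ≤ n) : LinearMap.ker (iota n r) = ⊥ :=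
  LinearMap.ker_eq_bot.mpr (iota_injective h)

lemma blockOplusZero_mulVec (h : r ≤ n) (B : Matrix (Fin r) (Fin r) ℂ) (x : Fin n → ℂ) :
    (blockOplusZero n r B) *ᵥ x = iota n r (B *ᵥ (x ∘ Fin.castLE h)) := by
  funext i
  simp only [Matrix.mulVec, dotProduct]
  by_cases hi : (i : ℕ) < r
  · have hsub : (Finset.univ.map (Fin.castLEEmb h)) ⊆ Finset.univ := Finset.subset_univ _
    have hzero : ∀ k ∈ Finset.univ, k ∉ Finset.univ.map (Fin.castLEEmb h) →
        blockOplusZero n r B i k * x k = 0 := by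
      intro k _ hk
      have hkr : ¬ (k : ℕ) < r := by
        intro hkr
        exact hk (Finset.mem_map.mpr ⟨⟨k, hkr⟩, Finset.mem_univ _, by simp [Fin.castLEEmb]⟩)
      simp [blockOplusZero, hkr]
    rw [← Finset.sum_subset hsub hzero, Finset.sum_map]
    simp only [Fin.castLEEmb, Function.Embedding.coeFn_mk]
    have : ∀ p : Fin r, blockOplusZero n r B i (Fin.castLE h p) * x (Fin.castLE h p)
        = B ⟨i, hi⟩ p * (x ∘ Fin.castLE h) p := by
      intro p
      simp [blockOplusZero, hi, p.isLt, Fin.castLE]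
    rw [Finset.sum_congr rfl fun p _ => this p]
    simp [iota, hi, Matrix.mulVec, dotProduct]
  · have : ∀ k, blockOplusZero n r B i k * x k = 0 := by
      intro k; simp [blockOplusZero, hi]
    simp [Finset.sum_congr rfl fun k _ => this k, iota, hi]

lemma mulVecLin_blockOplusZero (h : r ≤ n) (B : Matrix (Fin r) (Fin r) ℂ) :
    (blockOplusZero n r B).mulVecLin
      = (iota n r) ∘ₗ B.mulVecLin ∘ₗ LinearMap.funLeft ℂ ℂ (Fin.castLE h) := by
  apply LinearMap.ext
  intro x
  exact blockOplusZero_mulVec h B x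

lemma rank_blockOplusZero (h : r ≤ n) (B : Matrix (Fin r) (Fin r) ℂ) :
    (blockOplusZero n r B).rank = B.rank := by
  rw [Matrix.rank, Matrix.rank, mulVecLin_blockOplusZero h B]
  have hsurj : Function.Surjective (LinearMap.funLeft ℂ ℂ (Fin.castLE h)) :=
    LinearMap.funLeft_surjective_of_injective ℂ ℂ _ (Fin.castLE_injective h)
  rw [LinearMap.range_comp,
    LinearMap.range_comp_of_range_eq_top _ (LinearMap.range_eq_top.mpr hsurj)]
  have := Submodule.equivMapOfInjective (iota n r) (iota_injective h)
    (LinearMap.range B.mulVecLin)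
  exact (LinearEquiv.finrank_eq this).symm

lemma ker_blockOplusZero (h : r ≤ n) (B : Matrix (Fin r) (Fin r) ℂ) :
    LinearMap.ker (blockOplusZero n r B).mulVecLin
      = LinearMap.ker (B.mulVecLin ∘ₗ LinearMap.funLeft ℂ ℂ (Fin.castLE h)) := by
  rw [mulVecLin_blockOplusZero h B]
  exact LinearMap.ker_comp_of_ker_eq_bot _ (iota_ker h)

lemma sum_smul_blockOplusZero {m : ℕ} (lam : Fin m → ℂ) (At : Fin m → Matrix (Fin r) (Fin r) ℂ) :
    ∑ j, lam j • blockOplusZero n r (At j) = blockOplusZero n r (∑ j, lam j • At j) := by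
  ext i k
  by_cases hc : (i : ℕ) < r ∧ (k : ℕ) < r <;>
    simp [blockOplusZero, hc, Matrix.sum_apply]

lemma finrank_ker_funLeft (h : r ≤ n) :
    Module.finrank ℂ ↥(LinearMap.ker (LinearMap.funLeft ℂ ℂ (Fin.castLE h)
      : (Fin n → ℂ) →ₗ[ℂ] (Fin r → ℂ))) = n - r := by
  have hsurj : Function.Surjective (LinearMap.funLeft ℂ ℂ (Fin.castLE h)
      : (Fin n → ℂ) →ₗ[ℂ] (Fin r → ℂ)) :=
    LinearMap.funLeft_surjective_of_injective ℂ ℂ _ (Fin.castLE_injective h)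
  have hrn := LinearMap.finrank_range_add_finrank_ker
    (LinearMap.funLeft ℂ ℂ (Fin.castLE h) : (Fin n → ℂ) →ₗ[ℂ] (Fin r → ℂ))
  rw [LinearMap.range_eq_top.mpr hsurj, finrank_top, Module.finrank_fin_fun,
    Module.finrank_fin_fun] at hrn
  omega

end AuxBOZ

namespace AuxBOZ

lemma sum_smul_mulVec {n m : ℕ} (lam : Fin m → ℂ) (M : Fin m → Matrix (Fin n) (Fin n) ℂ)
    (x : Fin n → ℂ) :
    (∑ j, lam j • M j) *ᵥ x = ∑ j, lam j • (M j *ᵥ x) := by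
  funext i
  simp only [Matrix.mulVec, dotProduct, Matrix.sum_apply, Matrix.smul_apply, Finset.sum_apply,
    Pi.smul_apply, smul_eq_mul, Finset.sum_mul, Finset.mul_sum, mul_assoc]
  rw [Finset.sum_comm]

lemma conj_sum {n m : ℕ} (Q : Matrix (Fin n) (Fin n) ℂ) (A : Fin m → Matrix (Fin n) (Fin n) ℂ)
    (lam : Fin m → ℂ) :
    Qᵀ * (∑ j, lam j • A j) * Q = ∑ j, lam j • (Qᵀ * A j * Q) := by
  rw [Finset.mul_sum, Finset.sum_mul]
  simp [Matrix.mul_smul, Matrix.smul_mul]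

lemma rank_conj {n : ℕ} {Q : Matrix (Fin n) (Fin n) ℂ} (hQ : IsUnit Q)
    (M : Matrix (Fin n) (Fin n) ℂ) : (Qᵀ * M * Q).rank = M.rank := by
  have hdet : IsUnit Q.det := (Matrix.isUnit_iff_isUnit_det Q).mp hQ
  have hdetT : IsUnit Qᵀ.det := by rwa [Matrix.det_transpose]
  rw [Matrix.rank_mul_eq_left_of_isUnit_det Q (Qᵀ * M) hdet,
    Matrix.rank_mul_eq_right_of_isUnit_det Qᵀ M hdetT]

lemma isUnit_of_rank_eq {r : ℕ} (C : Matrix (Fin r) (Fin r) ℂ) (h : C.rank = r) : IsUnit C := by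
  rw [← Matrix.mulVec_surjective_iff_isUnit]
  have htop : LinearMap.range C.mulVecLin = ⊤ := by
    apply Submodule.eq_top_of_finrank_eq
    rw [← Matrix.rank, h, Module.finrank_fin_fun]
  intro v
  obtain ⟨w, hw⟩ := LinearMap.range_eq_top.mp htop v
  exact ⟨w, hw⟩

lemma moreover_aux {n m r : ℕ} (A : Fin m → Matrix (Fin n) (Fin n) ℂ) (hrn : r ≤ n)
    (Q : Matrix (Fin n) (Fin n) ℂ) (At : Fin m → Matrix (Fin r) (Fin r) ℂ)
    (hQ : IsUnit Q) (hblock : ∀ j, Qᵀ * A j * Q = blockOplusZero n r (At j))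
    (lam₀ : Fin m → ℂ) (h0 : (∑ j, lam₀ j • A j).rank = r) :
    IsUnit (∑ j, lam₀ j • At j) := by
  have h1 : Qᵀ * (∑ j, lam₀ j • A j) * Q = blockOplusZero n r (∑ j, lam₀ j • At j) := by
    rw [conj_sum]
    simp_rw [hblock]
    exact sum_smul_blockOplusZero _ _
  have h2 := rank_conj hQ (∑ j, lam₀ j • A j)
  rw [h1, rank_blockOplusZero hrn] at h2
  exact isUnit_of_rank_eq _ (h2.trans h0)

lemma conj_entry {n : ℕ} (v : Fin n → Fin n → ℂ) (M : Matrix (Fin n) (Fin n) ℂ) (i k : Fin n) :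
    ((Matrix.of fun a b => v b a)ᵀ * M * (Matrix.of fun a b => v b a)) i k
      = v i ⬝ᵥ (M *ᵥ v k) := by
  simp only [Matrix.mul_apply, Matrix.transpose_apply, Matrix.of_apply, dotProduct, Matrix.mulVec,
    Finset.sum_mul, Finset.mul_sum]
  rw [Finset.sum_comm]
  refine Finset.sum_congr rfl fun c _ => Finset.sum_congr rfl fun a _ => by ring

end AuxBOZ

/-- Let A_1, …, A_m be symmetric n×n complex matrices with maximum pencil
rank r. Then dim(⋂_j ker A_j) = n − r iff there is an invertible Q with
Qᵀ A_j Q = Ã_j ⊕ 0_{n−r} for symmetric Ã_j ∈ M_r(ℂ).  Moreover, for any such Q and Ã_j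
and any λ₀ with rank A(λ₀) = r, the matrix Ã(λ₀) = Σ_j (λ₀)_j Ã_j is invertible. -/
theorem dim_ker_iff_congruent_block_form (n m : ℕ)
    (A : Fin m → Matrix (Fin n) (Fin n) ℂ) (hsymm : ∀ j, (A j)ᵀ = A j) (r : ℕ)
    (hr : r = ⨆ lam : Fin m → ℂ, (∑ j, lam j • A j).rank) :
    ((Module.finrank ℂ ↥(⨅ j, LinearMap.ker (A j).mulVecLin) = n - r) ↔
      (∃ Q : Matrix (Fin n) (Fin n) ℂ, IsUnit Q ∧
        ∃ At : Fin m → Matrix (Fin r) (Fin r) ℂ, (∀ j, (At j)ᵀ = At j) ∧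
          ∀ j, Qᵀ * A j * Q = blockOplusZero n r (At j))) ∧
    (∀ (Q : Matrix (Fin n) (Fin n) ℂ) (At : Fin m → Matrix (Fin r) (Fin r) ℂ),
      IsUnit Q → (∀ j, (At j)ᵀ = At j) →
      (∀ j, Qᵀ * A j * Q = blockOplusZero n r (At j)) →
      ∀ lam₀ : Fin m → ℂ, (∑ j, lam₀ j • A j).rank = r →
        IsUnit (∑ j, lam₀ j • At j)) := by
  classical
  have hle : ∀ lam : Fin m → ℂ, (∑ j, lam j • A j).rank ≤ n := fun lam =>
    (Matrix.rank_le_card_height _).trans (by simp)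
  have hrn : r ≤ n := by rw [hr]; exact ciSup_le hle
  obtain ⟨lam₀, hlam₀⟩ : ∃ lam₀ : Fin m → ℂ, (∑ j, lam₀ j • A j).rank = r := by
    have hne : (Set.range fun lam : Fin m → ℂ => (∑ j, lam j • A j).rank).Nonempty :=
      Set.range_nonempty _
    have hbdd : BddAbove (Set.range fun lam : Fin m → ℂ => (∑ j, lam j • A j).rank) :=
      ⟨n, by rintro _ ⟨lam, rfl⟩; exact hle lam⟩
    obtain ⟨lam₁, h⟩ := Nat.sSup_mem hne hbdd
    exact ⟨lam₁, by rw [hr]; exact h⟩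
  constructor
  · constructor
    · -- forward direction: construct Q from an adapted basis
      intro hdim
      set K : Submodule ℂ (Fin n → ℂ) := ⨅ j, LinearMap.ker (A j).mulVecLin with hKdef
      obtain ⟨W, hcompl⟩ := Submodule.exists_isCompl K
      have hfin := Submodule.finrank_add_eq_of_isCompl hcompl
      rw [hdim, Module.finrank_fin_fun] at hfin
      have hWr : Module.finrank ℂ ↥W = r := by
        have h9 : n - r + Module.finrank ℂ ↥W = n := hfin
        have h10 : n - r + Module.finrank ℂ ↥W = n - r + r := by
          rw [h9, Nat.sub_add_cancel hrn]
        exact Nat.add_left_cancel h10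
      let bW : Module.Basis (Fin r) ℂ W := Module.finBasisOfFinrankEq ℂ W hWr
      let bK : Module.Basis (Fin (n - r)) ℂ K := Module.finBasisOfFinrankEq ℂ K hdim
      let eidx : (Fin r ⊕ Fin (n - r)) ≃ Fin n :=
        finSumFinEquiv.trans (finCongr (Nat.add_sub_cancel' hrn))
      let b : Module.Basis (Fin n) ℂ (Fin n → ℂ) :=
        ((bW.prod bK).map (Submodule.prodEquivOfIsCompl W K hcompl.symm)).reindex eidx
      have key1 : ∀ i : Fin n, ¬ (i : ℕ) < r → b i ∈ K := by
        intro i hi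
        rw [Module.Basis.reindex_apply]
        rcases hcase : eidx.symm i with a | c
        · exfalso
          apply hi
          have hi2 : i = eidx (Sum.inl a) := by rw [← hcase, Equiv.apply_symm_apply]
          have hval : ((eidx (Sum.inl a) : Fin n) : ℕ) = (a : ℕ) := by
            simp [eidx]
          rw [hi2, hval]
          exact a.isLt
        · rw [Module.Basis.map_apply, Submodule.coe_prodEquivOfIsCompl']
          simp only [Module.Basis.prod_apply_inr_fst, Module.Basis.prod_apply_inr_snd,
            ZeroMemClass.coe_zero, zero_add]
          exact Submodule.coe_mem (bK c)
      have key0 : ∀ v : Fin n → ℂ, v ∈ K → ∀ j, A j *ᵥ v = 0 := by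
        intro v hv j
        rw [hKdef, Submodule.mem_iInf] at hv
        simpa [Matrix.mulVecLin_apply] using hv j
      obtain ⟨Q, hQdef⟩ : ∃ Q' : Matrix (Fin n) (Fin n) ℂ,
          Q' = Matrix.of fun i k => b k i := ⟨_, rfl⟩
      have hentry : ∀ (j : Fin m) (i k : Fin n), (Qᵀ * A j * Q) i k = b i ⬝ᵥ (A j *ᵥ b k) := by
        intro j i k
        rw [hQdef]
        exact AuxBOZ.conj_entry (fun p => b p) (A j) i k
      have hsymQ : ∀ j, (Qᵀ * A j * Q)ᵀ = Qᵀ * A j * Q := by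
        intro j
        simp [Matrix.transpose_mul, Matrix.transpose_transpose, hsymm j, Matrix.mul_assoc]
      have hzero : ∀ (j : Fin m) (i k : Fin n), ¬ ((i : ℕ) < r ∧ (k : ℕ) < r) → (Qᵀ * A j * Q) i k = 0 := by
        intro j i k hc
        rw [hentry]
        by_cases hk : (k : ℕ) < r
        · have hi : ¬ (i : ℕ) < r := fun hi => hc ⟨hi, hk⟩
          rw [Matrix.dotProduct_mulVec]
          have hv : (b i) ᵥ* (A j) = (A j) *ᵥ (b i) := by
            conv_lhs => rw [← hsymm j, Matrix.vecMul_transpose]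
          rw [hv, key0 _ (key1 i hi) j, zero_dotProduct]
        · rw [key0 _ (key1 k hk) j, dotProduct_zero]
      refine ⟨Q, ?_, fun j => Matrix.of fun p q =>
          (Qᵀ * A j * Q) (Fin.castLE hrn p) (Fin.castLE hrn q), ?_, ?_⟩
      · rw [hQdef]
        have hQmat : (Matrix.of fun i k => b k i : Matrix (Fin n) (Fin n) ℂ)
            = (Pi.basisFun ℂ (Fin n)).toMatrix ⇑b := by
          ext i k
          simp [Module.Basis.toMatrix_apply]
        rw [hQmat]
        have := Module.Basis.invertibleToMatrix (Pi.basisFun ℂ (Fin n)) b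
        exact isUnit_of_invertible _
      · intro j
        ext p q
        show (Qᵀ * A j * Q) (Fin.castLE hrn q) (Fin.castLE hrn p)
          = (Qᵀ * A j * Q) (Fin.castLE hrn p) (Fin.castLE hrn q)
        conv_lhs => rw [← hsymQ j]
        rfl
      · intro j
        ext i k
        by_cases hc : (i : ℕ) < r ∧ (k : ℕ) < r
        · have h1 : blockOplusZero n r
              (Matrix.of fun p q => (Qᵀ * A j * Q) (Fin.castLE hrn p) (Fin.castLE hrn q)) i k
              = (Qᵀ * A j * Q) (Fin.castLE hrn ⟨(i : ℕ), hc.1⟩) (Fin.castLE hrn ⟨(k : ℕ), hc.2⟩) := by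
            simp [blockOplusZero, hc]
          have e1 : Fin.castLE hrn ⟨(i : ℕ), hc.1⟩ = i := Fin.ext rfl
          have e2 : Fin.castLE hrn ⟨(k : ℕ), hc.2⟩ = k := Fin.ext rfl
          rw [h1, e1, e2]
        · have h1 : blockOplusZero n r
              (Matrix.of fun p q => (Qᵀ * A j * Q) (Fin.castLE hrn p) (Fin.castLE hrn q)) i k
              = 0 := by
            simp [blockOplusZero, hc]
          rw [h1]
          exact hzero j i k hc
    · -- backward direction
      rintro ⟨Q, hQ, At, hAtsymm, hblock⟩
      have hC : IsUnit (∑ j, lam₀ j • At j) :=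
        AuxBOZ.moreover_aux A hrn Q At hQ hblock lam₀ hlam₀
      have hkerB : (⨅ j, LinearMap.ker (blockOplusZero n r (At j)).mulVecLin)
          = LinearMap.ker (LinearMap.funLeft ℂ ℂ (Fin.castLE hrn)
              : (Fin n → ℂ) →ₗ[ℂ] (Fin r → ℂ)) := by
        apply le_antisymm
        · intro x hx
          rw [Submodule.mem_iInf] at hx
          have hxj : ∀ j, (blockOplusZero n r (At j)) *ᵥ x = 0 := by
            intro j
            simpa [Matrix.mulVecLin_apply] using hx j
          have hsum : blockOplusZero n r (∑ j, lam₀ j • At j) *ᵥ x = 0 := by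
            rw [← AuxBOZ.sum_smul_blockOplusZero, AuxBOZ.sum_smul_mulVec]
            simp [hxj]
          rw [AuxBOZ.blockOplusZero_mulVec hrn] at hsum
          have h1 : (∑ j, lam₀ j • At j) *ᵥ (x ∘ Fin.castLE hrn) = 0 := by
            apply AuxBOZ.iota_injective hrn
            rw [hsum, map_zero]
          have h2 : x ∘ Fin.castLE hrn = 0 := by
            have hinj := Matrix.mulVec_injective_iff_isUnit.mpr hC
            apply hinj
            rw [h1, Matrix.mulVec_zero]
          simpa [LinearMap.mem_ker, LinearMap.funLeft] using h2
        · intro x hx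
          have hx0 : x ∘ Fin.castLE hrn = 0 := hx
          rw [Submodule.mem_iInf]
          intro j
          rw [LinearMap.mem_ker, Matrix.mulVecLin_apply, AuxBOZ.blockOplusZero_mulVec hrn, hx0,
            Matrix.mulVec_zero, map_zero]
      obtain ⟨u, hu⟩ := hQ
      let e : (Fin n → ℂ) ≃ₗ[ℂ] (Fin n → ℂ) :=
        LinearEquiv.ofLinear Q.mulVecLin ((↑u⁻¹ : Matrix (Fin n) (Fin n) ℂ)).mulVecLin
          (by rw [← Matrix.mulVecLin_mul, ← hu, Units.mul_inv, Matrix.mulVecLin_one])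
          (by rw [← Matrix.mulVecLin_mul, ← hu, Units.inv_mul, Matrix.mulVecLin_one])
      have he : ∀ y, e y = Q *ᵥ y := fun y => rfl
      have hcoe : ∀ y, (e : (Fin n → ℂ) →ₗ[ℂ] (Fin n → ℂ)) y = Q *ᵥ y := fun y => rfl
      have hQTinj : Function.Injective (Qᵀ).mulVec :=
        Matrix.mulVec_injective_iff_isUnit.mpr ((Matrix.isUnit_transpose Q).mpr ⟨u, hu⟩)
      have hmap : (⨅ j, LinearMap.ker (A j).mulVecLin)
          = Submodule.map (e : (Fin n → ℂ) →ₗ[ℂ] (Fin n → ℂ))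
              (⨅ j, LinearMap.ker (blockOplusZero n r (At j)).mulVecLin) := by
        ext x
        simp only [Submodule.mem_iInf, Submodule.mem_map, LinearMap.mem_ker,
          Matrix.mulVecLin_apply]
        constructor
        · intro hx
          refine ⟨e.symm x, fun j => ?_, by simp⟩
          have hx' : Q *ᵥ (e.symm x) = x := by
            have h3 := e.apply_symm_apply x
            rwa [he] at h3
          rw [← hblock j, ← Matrix.mulVec_mulVec, ← Matrix.mulVec_mulVec, hx', hx j,
            Matrix.mulVec_zero]
        · rintro ⟨y, hy, rfl⟩
          intro j
          apply hQTinj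
          rw [Matrix.mulVec_zero, hcoe, Matrix.mulVec_mulVec, Matrix.mulVec_mulVec, hblock j]
          exact hy j
      rw [hmap, hkerB, LinearEquiv.finrank_map_eq, AuxBOZ.finrank_ker_funLeft hrn]
  · -- moreover
    intro Q At hQ _ hblock lam₁ h1
    exact AuxBOZ.moreover_aux A hrn Q At hQ hblock lam₁ h1
end

section
/- Let A_1, …, A_m be symmetric n×n complex matrices with maximum pencil rank r, where A(λ) = Σ_{j=1}^m λ_j A_j, and suppose A_1, …, A_m are simultaneously diagonalizable via congruence. Then for every λ_0 ∈ ℂ^m with rank A(λ_0) = r one has ⋂_{j=1}^m ker A_j = ker A(λ_0); in particular dim(⋂_{j=1}^m ker A_j) = n − r. -/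
open Matrix

private lemma exists_perturb_ne_zero {n : ℕ} (f g : Fin n → ℂ) (T : Finset (Fin n))
    (h : ∀ k ∈ T, g k = 0 → f k ≠ 0) :
    ∃ t : ℂ, ∀ k ∈ T, f k + t * g k ≠ 0 := by
  obtain ⟨t, ht⟩ := Infinite.exists_notMem_finset (T.image fun k => -f k / g k)
  refine ⟨t, fun k hk h0 => ?_⟩
  by_cases hg : g k = 0
  · exact h k hk hg (by simpa [hg] using h0)
  · apply ht
    refine Finset.mem_image.mpr ⟨k, hk, ?_⟩
    field_simp
    linear_combination -h0

/-- Let A_1, …, A_m be symmetric n×n complex matrices with maximum pencil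
rank r, and suppose A_1, …, A_m are SDC. Then for every λ₀ ∈ ℂ^m with rank A(λ₀) = r one
has ⋂_j ker A_j = ker A(λ₀); in particular dim(⋂_j ker A_j) = n − r. -/
theorem sdc_implies_ker_eq_ker_pencil (n m : ℕ)
    (A : Fin m → Matrix (Fin n) (Fin n) ℂ) (hsymm : ∀ j, (A j)ᵀ = A j) (r : ℕ)
    (hr : r = ⨆ lam : Fin m → ℂ, (∑ j, lam j • A j).rank)
    (hSDC : ∃ P : Matrix (Fin n) (Fin n) ℂ, IsUnit P ∧ ∀ j, (Pᵀ * A j * P).IsDiag) :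
    (∀ lam₀ : Fin m → ℂ, (∑ j, lam₀ j • A j).rank = r →
      (⨅ j, LinearMap.ker (A j).mulVecLin) = LinearMap.ker (∑ j, lam₀ j • A j).mulVecLin) ∧
    Module.finrank ℂ ↥(⨅ j, LinearMap.ker (A j).mulVecLin) = n - r := by
  obtain ⟨P, hP, hD⟩ := hSDC
  have hPdet : IsUnit P.det := (Matrix.isUnit_iff_isUnit_det P).mp hP
  have hPTdet : IsUnit Pᵀ.det := by rwa [Matrix.det_transpose]
  set D : Fin m → Matrix (Fin n) (Fin n) ℂ := fun j => Pᵀ * A j * P with hDdef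
  have hD' : ∀ j, (D j).IsDiag := hD
  -- congruence of pencils
  have hcong : ∀ lam : Fin m → ℂ, Pᵀ * (∑ j, lam j • A j) * P = ∑ j, lam j • D j := by
    intro lam
    rw [Matrix.mul_sum, Finset.sum_mul]
    refine Finset.sum_congr rfl fun j _ => ?_
    rw [mul_smul_comm, smul_mul_assoc]
  -- the diagonal entries as linear functions of lam
  set w : (Fin m → ℂ) → Fin n → ℂ := fun lam i => ∑ j, lam j * (D j) i i with hw
  have hdiag : ∀ lam : Fin m → ℂ, ∑ j, lam j • D j = diagonal (w lam) := by
    intro lam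
    ext i k
    by_cases hik : i = k
    · subst hik
      simp [Matrix.sum_apply, hw]
    · simp only [Matrix.sum_apply, Matrix.smul_apply, smul_eq_mul,
        Matrix.diagonal_apply_ne _ hik]
      refine Finset.sum_eq_zero fun j _ => ?_
      rw [hD' j hik, mul_zero]
  -- rank of the pencil
  have hrk : ∀ lam : Fin m → ℂ,
      (∑ j, lam j • A j).rank = (Finset.univ.filter fun i => w lam i ≠ 0).card := by
    intro lam
    have h1 : (∑ j, lam j • A j).rank = (∑ j, lam j • D j).rank := by
      rw [← hcong lam, Matrix.rank_mul_eq_left_of_isUnit_det _ _ hPdet,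
        Matrix.rank_mul_eq_right_of_isUnit_det _ _ hPTdet]
    rw [h1, hdiag lam, Matrix.rank_diagonal, Fintype.card_subtype]
  -- bddAbove and sup bound
  have hbdd : BddAbove (Set.range fun lam : Fin m → ℂ => (∑ j, lam j • A j).rank) := by
    refine ⟨n, fun x hx => ?_⟩
    obtain ⟨lam, rfl⟩ := hx
    exact Matrix.rank_le_width _
  have hle : ∀ lam : Fin m → ℂ, (∑ j, lam j • A j).rank ≤ r := by
    intro lam
    rw [hr]
    exact le_ciSup hbdd lam
  -- linearity of w in lam
  have hwlin : ∀ (lam μ : Fin m → ℂ) (t : ℂ) (k : Fin n),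
      w (lam + t • μ) k = w lam k + t * w μ k := by
    intro lam μ t k
    simp only [hw, Pi.add_apply, Pi.smul_apply, smul_eq_mul, add_mul,
      Finset.sum_add_distrib, Finset.mul_sum, mul_assoc]
  -- key: at a rank maximizer, w lam₀ i = 0 forces all diagonal entries to vanish
  have hA0 : ∀ lam₀ : Fin m → ℂ, (∑ j, lam₀ j • A j).rank = r →
      ∀ i j, w lam₀ i = 0 → (D j) i i = 0 := by
    intro lam₀ h0 i j hwi
    by_contra hDji
    set μ : Fin m → ℂ := Pi.single j 1 with hμ
    have hwμ : ∀ k, w μ k = (D j) k k := by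
      intro k
      simp [hw, hμ, Pi.single_apply, ite_mul]
    set T : Finset (Fin n) := insert i (Finset.univ.filter fun k => w lam₀ k ≠ 0) with hT
    have hiT : i ∉ (Finset.univ.filter fun k => w lam₀ k ≠ 0) := by
      simp [hwi]
    obtain ⟨t, ht⟩ := exists_perturb_ne_zero (w lam₀) (w μ) T (by
      intro k hk hgk
      rcases Finset.mem_insert.mp hk with rfl | hk
      · exact absurd (hwμ k ▸ hgk) hDji
      · exact (Finset.mem_filter.mp hk).2)
    have hsub : T ⊆ Finset.univ.filter fun k => w (lam₀ + t • μ) k ≠ 0 := by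
      intro k hk
      refine Finset.mem_filter.mpr ⟨Finset.mem_univ k, ?_⟩
      rw [hwlin]
      exact ht k hk
    have hcard : (Finset.univ.filter fun k => w lam₀ k ≠ 0).card + 1 ≤
        (Finset.univ.filter fun k => w (lam₀ + t • μ) k ≠ 0).card := by
      calc (Finset.univ.filter fun k => w lam₀ k ≠ 0).card + 1
          = T.card := (Finset.card_insert_of_notMem hiT).symm
        _ ≤ _ := Finset.card_le_card hsub
    have e1 : (Finset.univ.filter fun k => w lam₀ k ≠ 0).card = r := by
      rw [← hrk lam₀, h0]
    have : r + 1 ≤ r := by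
      calc r + 1 = (Finset.univ.filter fun k => w lam₀ k ≠ 0).card + 1 := by rw [e1]
        _ ≤ (Finset.univ.filter fun k => w (lam₀ + t • μ) k ≠ 0).card := hcard
        _ = (∑ j', (lam₀ + t • μ) j' • A j').rank := (hrk _).symm
        _ ≤ r := hle _
    exact absurd this (by simp)
  -- moving vectors through P
  have hxP : ∀ x : Fin n → ℂ, P *ᵥ (P⁻¹ *ᵥ x) = x := by
    intro x
    rw [Matrix.mulVec_mulVec, Matrix.mul_nonsing_inv _ hPdet, Matrix.one_mulVec]
  have hPT0 : ∀ v : Fin n → ℂ, Pᵀ *ᵥ v = 0 → v = 0 := by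
    intro v hv
    have : (Pᵀ)⁻¹ *ᵥ (Pᵀ *ᵥ v) = v := by
      rw [Matrix.mulVec_mulVec, Matrix.nonsing_inv_mul _ hPTdet, Matrix.one_mulVec]
    rw [← this, hv, Matrix.mulVec_zero]
  -- linearity of pencil mulVec
  have hsum_mulVec : ∀ (lam : Fin m → ℂ) (x : Fin n → ℂ),
      (∑ j, lam j • A j) *ᵥ x = ∑ j, lam j • (A j *ᵥ x) := by
    intro lam x
    ext i
    simp only [Matrix.mulVec, dotProduct, Matrix.sum_apply, Matrix.smul_apply,
      Finset.sum_apply, Pi.smul_apply, smul_eq_mul, Finset.sum_mul, Finset.mul_sum, mul_assoc]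
    rw [Finset.sum_comm]
  -- part one
  have part1 : ∀ lam₀ : Fin m → ℂ, (∑ j, lam₀ j • A j).rank = r →
      (⨅ j, LinearMap.ker (A j).mulVecLin) = LinearMap.ker (∑ j, lam₀ j • A j).mulVecLin := by
    intro lam₀ h0
    ext x
    simp only [Submodule.mem_iInf, LinearMap.mem_ker, Matrix.mulVecLin_apply]
    constructor
    · intro h
      rw [hsum_mulVec]
      refine Finset.sum_eq_zero fun j _ => ?_
      rw [h j, smul_zero]
    · intro hx j
      have hxy0 : P *ᵥ (P⁻¹ *ᵥ x) = x := hxP x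
      obtain ⟨y, hxy⟩ : ∃ y : Fin n → ℂ, P *ᵥ y = x := ⟨_, hxy0⟩
      have hDy : ∀ (M : Matrix (Fin n) (Fin n) ℂ), (Pᵀ * M * P) *ᵥ y = Pᵀ *ᵥ (M *ᵥ x) := by
        intro M
        rw [← hxy, Matrix.mulVec_mulVec, Matrix.mulVec_mulVec]
      have hpencil : diagonal (w lam₀) *ᵥ y = 0 := by
        rw [← hdiag lam₀, ← hcong lam₀, hDy, hx, Matrix.mulVec_zero]
      have hdiagy : ∀ i, w lam₀ i * y i = 0 := by
        intro i
        have := congrFun hpencil i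
        rwa [Matrix.mulVec_diagonal] at this
      have hDjy : D j *ᵥ y = 0 := by
        funext i
        have hDi : (D j *ᵥ y) i = D j i i * y i := by
          have h0' : (D j *ᵥ y) i = ∑ k, D j i k * y k := rfl
          rw [h0']
          exact Finset.sum_eq_single i (fun k _ hk => by rw [hD' j (Ne.symm hk), zero_mul])
            (fun h => absurd (Finset.mem_univ i) h)
        by_cases hyi : y i = 0
        · simp [hDi, hyi]
        · have hwi : w lam₀ i = 0 := (mul_eq_zero.mp (hdiagy i)).resolve_right hyi
          simp [hDi, hA0 lam₀ h0 i j hwi]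
      have : Pᵀ *ᵥ (A j *ᵥ x) = 0 := by
        rw [← hDy (A j)]
        exact hDjy
      exact hPT0 _ this
  refine ⟨part1, ?_⟩
  -- existence of a rank maximizer
  have hne : (Set.range fun lam : Fin m → ℂ => (∑ j, lam j • A j).rank).Nonempty :=
    ⟨_, ⟨0, rfl⟩⟩
  have hmem := Nat.sSup_mem hne hbdd
  have hrs : r = sSup (Set.range fun lam : Fin m → ℂ => (∑ j, lam j • A j).rank) := hr
  rw [← hrs] at hmem
  obtain ⟨lam₀, hlam₀⟩ := hmem
  replace hlam₀ : (∑ j, lam₀ j • A j).rank = r := hlam₀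
  rw [part1 lam₀ hlam₀]
  -- rank-nullity
  have hrn := LinearMap.finrank_range_add_finrank_ker (∑ j, lam₀ j • A j).mulVecLin
  rw [Module.finrank_fintype_fun_eq_card, Fintype.card_fin] at hrn
  have hrank_eq : (∑ j, lam₀ j • A j).rank
      = Module.finrank ℂ ↥(LinearMap.range (∑ j, lam₀ j • A j).mulVecLin) := rfl
  have hsum : r + Module.finrank ℂ ↥(LinearMap.ker (∑ j, lam₀ j • A j).mulVecLin) = n := by
    rw [← hlam₀, hrank_eq]
    exact hrn
  exact Nat.eq_sub_of_add_eq' hsum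
end
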